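/- Let p be a prime, l ≥ 0, and suppose we have integers x ≥ 0, and a collection of at least px + p² - 3p + 3 pairs of integers (a_i, b_i), all of whose reductions mod p² lie in the union over μ of the classes L_{νμ} for one fixed ν (i.e., all are of colour ν at their level), such that at least x of them have colour nuance (ν, μ₀) for some fixed μ₀, and at least x have a colour nuance (ν, μ) with μ ≠ μ₀. If for any p-1 pairs of one nuance and one pair of a different nuance there is a contraction to a vector divisible by p but with (1/p)·(sum) nonzero mod p (as guaranteed by Lemma 18 with weights y_i^k, (p-1) | k), then one can select x pairwise disjoint subsets, each of size p, each consisting of p-1 pairs of a common nuance together with one pair of a different nuance. -/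

import Mathlib

private lemma count_sdiff' {ι : Type*} [DecidableEq ι] (A T : Finset ι) (hT : T ⊆ A)
    (q : ι → Prop) [DecidablePred q] :
    ((A \ T).filter q).card + (T.filter q).card = (A.filter q).card := by
  have h1 : (A \ T).filter q = A.filter q \ T.filter q := by
    ext z
    simp only [Finset.mem_sdiff, Finset.mem_filter]
    tauto
  rw [h1]
  exact Finset.card_sdiff_add_card_eq_card (Finset.filter_subset_filter q hT)

private lemma split_card' {ι : Type*} [DecidableEq ι] (T : Finset ι) (μ : ι → ℕ) (μ₀ : ℕ) :
    (T.filter (fun i => μ i = μ₀)).card + (T.filter (fun i => μ i ≠ μ₀)).card = T.card := by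
  simp only [ne_eq]
  exact Finset.card_filter_add_card_filter_not _

private lemma extract' {ι : Type*} [DecidableEq ι] (p : ℕ) (hp : 2 ≤ p) (μ : ι → ℕ)
    (A : Finset ι) (η μ' : ℕ) (hne : η ≠ μ')
    (h1 : p - 1 ≤ (A.filter (fun i => μ i = η)).card)
    (h2 : 1 ≤ (A.filter (fun i => μ i = μ')).card) :
    ∃ T, T ⊆ A ∧ T.card = p ∧
      (T.filter (fun j => μ j = η)).card = p - 1 ∧
      (T.filter (fun j => μ j = μ')).card = 1 := by
  obtain ⟨P, hPsub, hPcard⟩ := Finset.exists_subset_card_eq h1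
  obtain ⟨e, he⟩ := Finset.card_pos.mp (by omega : 0 < (A.filter (fun i => μ i = μ')).card)
  have heA : e ∈ A := (Finset.mem_filter.mp he).1
  have heμ : μ e = μ' := (Finset.mem_filter.mp he).2
  have hPμ : ∀ z ∈ P, μ z = η := fun z hz => (Finset.mem_filter.mp (hPsub hz)).2
  have hene : e ∉ P := fun h => hne (by rw [← hPμ e h, heμ])
  refine ⟨insert e P, ?_, ?_, ?_, ?_⟩
  · intro z hz
    rcases Finset.mem_insert.mp hz with rfl | hz
    · exact heA
    · exact (Finset.mem_filter.mp (hPsub hz)).1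
  · rw [Finset.card_insert_of_notMem hene, hPcard]; omega
  · rw [Finset.filter_insert, if_neg (by rw [heμ]; exact fun h => hne h.symm),
      Finset.filter_true_of_mem hPμ]
    exact hPcard
  · rw [Finset.filter_insert, if_pos heμ,
      Finset.filter_false_of_mem (fun z hz h => hne (by rw [← hPμ z hz, h]))]
    simp

private lemma aux' (p : ℕ) (hp : 2 ≤ p) {ι : Type*} [DecidableEq ι] (μ : ι → ℕ)
    (hμ : ∀ i, μ i ≤ p - 1) (μ₀ : ℕ) :
    ∀ (x : ℕ) (A : Finset ι),
      p * x + p ^ 2 + 3 ≤ A.card + 3 * p →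
      x ≤ (A.filter (fun i => μ i = μ₀)).card →
      x ≤ (A.filter (fun i => μ i ≠ μ₀)).card →
      ∃ S : Fin x → Finset ι, (∀ i, S i ⊆ A) ∧
        (∀ i j, i ≠ j → Disjoint (S i) (S j)) ∧
        ∀ i, (S i).card = p ∧
          ∃ η, ((S i).filter (fun j => μ j = η)).card = p - 1 ∧
            ∃ j ∈ S i, μ j ≠ η := by
  intro x
  induction x with
  | zero =>
    intro A _ _ _
    exact ⟨fun i => i.elim0, fun i => i.elim0, fun i => i.elim0, fun i => i.elim0⟩
  | succ m ih =>
    intro A hA ha hb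
    have hab : (A.filter (fun i => μ i = μ₀)).card + (A.filter (fun i => μ i ≠ μ₀)).card
        = A.card := split_card' A μ μ₀
    -- key step: given a good T, conclude by induction
    have key : ∀ T : Finset ι, T ⊆ A → T.card = p →
        (∃ η, (T.filter (fun j => μ j = η)).card = p - 1 ∧ ∃ j ∈ T, μ j ≠ η) →
        m ≤ ((A \ T).filter (fun i => μ i = μ₀)).card →
        m ≤ ((A \ T).filter (fun i => μ i ≠ μ₀)).card →
        ∃ S : Fin (m + 1) → Finset ι, (∀ i, S i ⊆ A) ∧
          (∀ i j, i ≠ j → Disjoint (S i) (S j)) ∧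
          ∀ i, (S i).card = p ∧
            ∃ η, ((S i).filter (fun j => μ j = η)).card = p - 1 ∧
              ∃ j ∈ S i, μ j ≠ η := by
      intro T hTA hTcard hTgood h1 h2
      have hcards : (A \ T).card + T.card = A.card :=
        Finset.card_sdiff_add_card_eq_card hTA
      have hA' : p * m + p ^ 2 + 3 ≤ (A \ T).card + 3 * p := by
        have hpm : p * (m + 1) = p * m + p := by ring
        rw [hpm] at hA
        omega
      obtain ⟨S', hS'sub, hS'disj, hS'good⟩ := ih (A \ T) hA' h1 h2
      have hS'subA : ∀ i, S' i ⊆ A := fun i => (hS'sub i).trans (Finset.sdiff_subset)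
      have hS'T : ∀ i, Disjoint T (S' i) := by
        intro i
        exact Finset.disjoint_left.mpr fun z hzT hzS =>
          (Finset.mem_sdiff.mp (hS'sub i hzS)).2 hzT
      refine ⟨Fin.cons T S', ?_, ?_, ?_⟩
      · intro i
        induction i using Fin.cases with
        | zero => simpa using hTA
        | succ i' => simpa using hS'subA i'
      · intro i j hij
        induction i using Fin.cases with
        | zero =>
          induction j using Fin.cases with
          | zero => exact absurd rfl hij
          | succ j' => simpa using hS'T j'
        | succ i' =>
          induction j using Fin.cases with
          | zero => simpa using (hS'T i').symm
          | succ j' =>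
            simp only [Fin.cons_succ]
            exact hS'disj i' j' (fun h => hij (by rw [h]))
      · intro i
        induction i using Fin.cases with
        | zero => simpa using ⟨hTcard, hTgood⟩
        | succ i' => simpa using hS'good i'
    have hμ₀le : μ₀ ≤ p - 1 := by
      obtain ⟨i₀, hi₀⟩ := Finset.card_pos.mp
        (by omega : 0 < (A.filter (fun i => μ i = μ₀)).card)
      have := (Finset.mem_filter.mp hi₀).2
      rw [← this]
      exact hμ i₀
    by_cases hcase : m + p ≤ (A.filter (fun i => μ i = μ₀)).card + 1
    · -- many of nuance μ₀: take p-1 of nuance μ₀ and one other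
      obtain ⟨e, he⟩ := Finset.card_pos.mp
        (by omega : 0 < (A.filter (fun i => μ i ≠ μ₀)).card)
      have heA : e ∈ A := (Finset.mem_filter.mp he).1
      have heμ : μ e ≠ μ₀ := (Finset.mem_filter.mp he).2
      obtain ⟨T, hTA, hTcard, hTη, hTμ'⟩ := extract' p hp μ A μ₀ (μ e)
        (fun h => heμ h.symm) (by omega)
        (Finset.card_pos.mpr ⟨e, Finset.mem_filter.mpr ⟨heA, rfl⟩⟩)
      have hTsplit := split_card' T μ μ₀
      refine key T hTA hTcard ⟨μ₀, hTη, ?_⟩ ?_ ?_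
      · obtain ⟨j, hj⟩ := Finset.card_pos.mp
          (by omega : 0 < (T.filter (fun j => μ j = μ e)).card)
        exact ⟨j, (Finset.mem_filter.mp hj).1, by rw [(Finset.mem_filter.mp hj).2]; exact heμ⟩
      · have := count_sdiff' A T hTA (fun i => μ i = μ₀)
        omega
      · have := count_sdiff' A T hTA (fun i => μ i ≠ μ₀)
        omega
    · -- few of nuance μ₀: find a popular other nuance by pigeonhole
      have hb_big : ((Finset.range p).erase μ₀).card * (m + p - 2) <
          (A.filter (fun i => μ i ≠ μ₀)).card := by
        have hcard_er : ((Finset.range p).erase μ₀).card = p - 1 := by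
          rw [Finset.card_erase_of_mem (Finset.mem_range.mpr (by omega)), Finset.card_range]
        rw [hcard_er]
        obtain ⟨q, rfl⟩ : ∃ q, p = q + 2 := ⟨p - 2, by omega⟩
        have e1 : q + 2 - 1 = q + 1 := by omega
        have e2 : m + (q + 2) - 2 = m + q := by omega
        rw [e1, e2]
        have hA2 : (q + 2) * (m + 1) + (q + 2) ^ 2 + 3 ≤
            (A.filter (fun i => μ i = μ₀)).card
            + (A.filter (fun i => μ i ≠ μ₀)).card + 3 * (q + 2) := by
          rw [hab]; exact hA
        nlinarith [hA2, hcase, Nat.not_le.mp hcase]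
      obtain ⟨η, hηmem, hηbig⟩ := Finset.exists_lt_card_fiber_of_mul_lt_card_of_maps_to
        (f := μ) (s := A.filter (fun i => μ i ≠ μ₀)) (t := (Finset.range p).erase μ₀)
        (fun i hi => Finset.mem_erase.mpr
          ⟨(Finset.mem_filter.mp hi).2, Finset.mem_range.mpr (by have := hμ i; omega)⟩)
        hb_big
      have hηne : η ≠ μ₀ := (Finset.mem_erase.mp hηmem).1
      have hfil : ((A.filter (fun i => μ i ≠ μ₀)).filter (fun i => μ i = η))
          = A.filter (fun i => μ i = η) := by
        ext z
        simp only [Finset.mem_filter]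
        constructor
        · rintro ⟨⟨h1, _⟩, h3⟩; exact ⟨h1, h3⟩
        · rintro ⟨h1, h3⟩; exact ⟨⟨h1, by rw [h3]; exact hηne⟩, h3⟩
      rw [hfil] at hηbig
      have hble : (A.filter (fun i => μ i = η)).card
          ≤ (A.filter (fun i => μ i ≠ μ₀)).card := by
        apply Finset.card_le_card
        intro z hz
        obtain ⟨h1, h2⟩ := Finset.mem_filter.mp hz
        exact Finset.mem_filter.mpr ⟨h1, by rw [h2]; exact hηne⟩
      obtain ⟨T, hTA, hTcard, hTη, hTμ'⟩ := extract' p hp μ A η μ₀ hηne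
        (by omega) (by omega)
      have hTsplit := split_card' T μ μ₀
      refine key T hTA hTcard ⟨η, hTη, ?_⟩ ?_ ?_
      · obtain ⟨j, hj⟩ := Finset.card_pos.mp
          (by omega : 0 < (T.filter (fun j => μ j = μ₀)).card)
        exact ⟨j, (Finset.mem_filter.mp hj).1,
          by rw [(Finset.mem_filter.mp hj).2]; exact fun h => hηne h.symm⟩
      · have := count_sdiff' A T hTA (fun i => μ i = μ₀)
        omega
      · have := count_sdiff' A T hTA (fun i => μ i ≠ μ₀)
        omega

theorem stmt_15 (p x n μ₀ : ℕ) (hp : p.Prime)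
    (hn : p * x + p ^ 2 - 3 * p + 3 ≤ n)
    (μ : Fin n → ℕ) (hμ : ∀ i, μ i ≤ p - 1) (hμ₀ : μ₀ ≤ p - 1)
    (hx₁ : x ≤ (Finset.univ.filter (fun i => μ i = μ₀)).card)
    (hx₂ : x ≤ (Finset.univ.filter (fun i => μ i ≠ μ₀)).card) :
    ∃ S : Fin x → Finset (Fin n),
      (∀ i j, i ≠ j → Disjoint (S i) (S j)) ∧
      ∀ i, (S i).card = p ∧
        ∃ η, ((S i).filter (fun j => μ j = η)).card = p - 1 ∧
          ∃ j ∈ S i, μ j ≠ η := by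
  have harith : ∀ c d n : ℕ, c - d + 3 ≤ n → c + 3 ≤ n + d := by
    intro c d n; omega
  have hA : p * x + p ^ 2 + 3 ≤ (Finset.univ : Finset (Fin n)).card + 3 * p := by
    rw [Finset.card_univ, Fintype.card_fin]
    exact harith _ _ _ hn
  obtain ⟨S, _, hdisj, hgood⟩ := aux' p hp.two_le μ hμ μ₀ x Finset.univ hA hx₁ hx₂
  exact ⟨S, hdisj, hgood⟩
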